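/- Let 0 < λ < 1, 0 < ω_X ≤ 1, and let γ satisfy 0 ≤ γ ≤ ω_X b(K) − (1−ω_X) c(K). Suppose p_0 ∈ [0,1] satisfies max{ (c(K)+γ)/((1−λ) ω_X (b(K)+c(K))) − λ/(1−λ), 0 } ≤ p_0 ≤ min{ γ/((1−λ) ω_X (b(K)+c(K))), 1 }, and define p(s) := (c(s)+γ)/(λ ω_X (b(K)+c(K))) − ((1−λ)/λ) p_0 for s ∈ [0,K]. Then 0 ≤ p(s) ≤ 1 for all s ∈ [0,K], and the two-point strategy σ_X^0 = p_0 δ_K + (1−p_0) δ_0, σ_X^X[x] = p(x) δ_K + (1−p(x)) δ_0, σ_X^Y[y] = p(y) δ_K + (1−p(y)) δ_0 satisfies, with ψ(s) := b(s) + c(s), both identities b(x) − γ = ψ(x) − λ ω_X ∫ ψ dσ_X^X[x] − (1−λ) ω_X ∫ ψ dσ_X^0 and −c(y) − γ = − λ ω_X ∫ ψ dσ_X^Y[y] − (1−λ) ω_X ∫ ψ dσ_X^0 for all x, y ∈ [0,K]. Consequently, in the randomly-alternating continuous Donation Game, this strategy is an equalizer that unilaterally enforces π_Y = γ. -/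

import Mathlib

open MeasureTheory

lemma two_point_integral {α : Type*} [MeasurableSpace α] [MeasurableSingletonClass α]
    (g : α → ℝ) (x y : α) (a a' : ℝ) (ha : 0 ≤ a) (ha' : 0 ≤ a') :
    ∫ s, g s ∂(ENNReal.ofReal a • Measure.dirac x + ENNReal.ofReal a' • Measure.dirac y)
      = a * g x + a' * g y := by
  have hi : ∀ z : α, Integrable g (Measure.dirac z) := by
    intro z
    refine (integrable_const (g z)).congr ?_
    rw [Filter.EventuallyEq, ae_dirac_eq]
    exact Filter.eventually_pure.mpr rfl
  rw [integral_add_measure ((hi x).smul_measure ENNReal.ofReal_ne_top)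
      ((hi y).smul_measure ENNReal.ofReal_ne_top),
    integral_smul_measure, integral_smul_measure, integral_dirac, integral_dirac,
    ENNReal.toReal_ofReal ha, ENNReal.toReal_ofReal ha', smul_eq_mul, smul_eq_mul]

set_option maxHeartbeats 1000000 in
/-- Two-point equalizer strategies in the randomly-alternating continuous
Donation Game: for `0 ≤ γ ≤ ωX b(K) − (1−ωX) c(K)` and suitable initial
cooperation probability `p₀`, the reaction probabilities `p(s)` lie in
`[0,1]`, the two-point strategy `σX0 = p₀ δ_K + (1−p₀) δ_0`,
`σX^X[x] = p(x) δ_K + (1−p(x)) δ_0`, `σX^Y[y] = p(y) δ_K + (1−p(y)) δ_0`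
satisfies both autocratic identities with `ψ(s) = b(s) + c(s)`, and
consequently it unilaterally enforces `π_Y = γ` for every strategy of player
`Y`. -/
theorem stmt_18
    (K : ℝ) (hK : 0 < K) (b c : ℝ → ℝ)
    (hbC : ContinuousOn b (Set.Icc 0 K)) (hcC : ContinuousOn c (Set.Icc 0 K))
    (hbM : MonotoneOn b (Set.Icc 0 K)) (hcM : MonotoneOn c (Set.Icc 0 K))
    (hb0 : b 0 = 0) (hc0 : c 0 = 0)
    (hcb : ∀ s ∈ Set.Ioc (0 : ℝ) K, c s < b s)
    (hcpos : ∀ s ∈ Set.Ioc (0 : ℝ) K, 0 < c s)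
    (lam : ℝ) (hlam0 : 0 < lam) (hlam1 : lam < 1)
    (ωX : ℝ) (hω0 : 0 < ωX) (hω1 : ωX ≤ 1)
    (γ : ℝ) (hγ0 : 0 ≤ γ) (hγ1 : γ ≤ ωX * b K - (1 - ωX) * c K)
    (p0 : ℝ)
    (hp0lb : max ((c K + γ) / ((1 - lam) * ωX * (b K + c K))
        - lam / (1 - lam)) 0 ≤ p0)
    (hp0ub : p0 ≤ min (γ / ((1 - lam) * ωX * (b K + c K))) 1)
    (p : Set.Icc (0 : ℝ) K → ℝ)
    (hp : ∀ s : Set.Icc (0 : ℝ) K,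
      p s = (c ↑s + γ) / (lam * ωX * (b K + c K)) - ((1 - lam) / lam) * p0)
    (σX0 : Measure (Set.Icc (0 : ℝ) K))
    (hσX0 : σX0 =
      ENNReal.ofReal p0 • Measure.dirac (⟨K, Set.right_mem_Icc.mpr hK.le⟩ : Set.Icc (0 : ℝ) K)
        + ENNReal.ofReal (1 - p0) • Measure.dirac (⟨0, Set.left_mem_Icc.mpr hK.le⟩ : Set.Icc (0 : ℝ) K))
    (σX : Set.Icc (0 : ℝ) K ⊕ Set.Icc (0 : ℝ) K → Measure (Set.Icc (0 : ℝ) K))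
    (hσXs : ∀ s : Set.Icc (0 : ℝ) K ⊕ Set.Icc (0 : ℝ) K, σX s =
      ENNReal.ofReal (p (Sum.elim id id s)) • Measure.dirac (⟨K, Set.right_mem_Icc.mpr hK.le⟩ : Set.Icc (0 : ℝ) K)
        + ENNReal.ofReal (1 - p (Sum.elim id id s)) • Measure.dirac (⟨0, Set.left_mem_Icc.mpr hK.le⟩ : Set.Icc (0 : ℝ) K)) :
    (∀ s : Set.Icc (0 : ℝ) K, 0 ≤ p s ∧ p s ≤ 1) ∧
    (∀ x : Set.Icc (0 : ℝ) K,
      b ↑x - γ =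
        (b ↑x + c ↑x)
          - lam * ωX * (∫ s, (b ↑s + c ↑s) ∂(σX (Sum.inl x)))
          - (1 - lam) * ωX * (∫ s, (b ↑s + c ↑s) ∂σX0)) ∧
    (∀ y : Set.Icc (0 : ℝ) K,
      -(c ↑y) - γ =
        -(lam * ωX * (∫ s, (b ↑s + c ↑s) ∂(σX (Sum.inr y))))
          - (1 - lam) * ωX * (∫ s, (b ↑s + c ↑s) ∂σX0)) ∧
    (∀ ν : ℕ → Measure (Set.Icc (0 : ℝ) K ⊕ Set.Icc (0 : ℝ) K),
      (∀ t, IsProbabilityMeasure (ν t)) →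
      (∀ E : Set (Set.Icc (0 : ℝ) K), MeasurableSet E →
        ν 0 (Sum.inl '' E) = ENNReal.ofReal ωX * σX0 E) →
      (∀ (t : ℕ) (E : Set (Set.Icc (0 : ℝ) K)), MeasurableSet E →
        ν (t + 1) (Sum.inl '' E) = ENNReal.ofReal ωX * ∫⁻ s, σX s E ∂(ν t)) →
      (1 - lam) * ∑' t : ℕ, lam ^ t *
          ∫ s, Sum.elim (fun x : Set.Icc (0 : ℝ) K => b ↑x)
            (fun y : Set.Icc (0 : ℝ) K => -(c ↑y)) s ∂(ν t) = γ) := by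
  set K' : Set.Icc (0 : ℝ) K := ⟨K, Set.right_mem_Icc.mpr hK.le⟩ with hK'
  set Z' : Set.Icc (0 : ℝ) K := ⟨0, Set.left_mem_Icc.mpr hK.le⟩ with hZ'
  have hKmem : K ∈ Set.Icc (0 : ℝ) K := Set.right_mem_Icc.mpr hK.le
  have hZmem : (0 : ℝ) ∈ Set.Icc (0 : ℝ) K := Set.left_mem_Icc.mpr hK.le
  have hcK : 0 < c K := hcpos K ⟨hK, le_rfl⟩
  have hbK : c K < b K := hcb K ⟨hK, le_rfl⟩
  set Ψ : ℝ := b K + c K with hΨdef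
  have hΨ : 0 < Ψ := by dsimp [Ψ]; linarith
  have h1lam : 0 < 1 - lam := by linarith
  have hD : 0 < (1 - lam) * ωX * Ψ := by positivity
  have hL : 0 < lam * ωX * Ψ := by positivity
  have hp0nn : 0 ≤ p0 := le_trans (le_max_right _ _) hp0lb
  have hp0le1 : p0 ≤ 1 := le_trans hp0ub (min_le_right _ _)
  have hcs_nn : ∀ s : Set.Icc (0 : ℝ) K, 0 ≤ c ↑s := fun s => by
    have := hcM hZmem s.2 s.2.1
    rwa [hc0] at this
  have hcs_le : ∀ s : Set.Icc (0 : ℝ) K, c ↑s ≤ c K := fun s => hcM s.2 hKmem s.2.2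
  have hbs_nn : ∀ s : Set.Icc (0 : ℝ) K, 0 ≤ b ↑s := fun s => by
    have := hbM hZmem s.2 s.2.1
    rwa [hb0] at this
  have hbs_le : ∀ s : Set.Icc (0 : ℝ) K, b ↑s ≤ b K := fun s => hbM s.2 hKmem s.2.2
  -- key inequalities from the bounds on p0
  have hub : (1 - lam) * ωX * Ψ * p0 ≤ γ := by
    have h := le_trans hp0ub (min_le_left _ _)
    have := (le_div_iff₀ hD).mp h
    linarith
  have hlb : c K + γ ≤ lam * ωX * Ψ + (1 - lam) * ωX * Ψ * p0 := by
    have h := le_trans (le_max_left _ _) hp0lb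
    rw [sub_le_iff_le_add] at h
    have h2 := (div_le_iff₀ hD).mp h
    have h3 : (p0 + lam / (1 - lam)) * ((1 - lam) * ωX * Ψ)
        = (1 - lam) * ωX * Ψ * p0 + lam * ωX * Ψ := by
      field_simp
    rw [h3] at h2
    linarith
  -- Part 1
  have part1 : ∀ s : Set.Icc (0 : ℝ) K, 0 ≤ p s ∧ p s ≤ 1 := by
    intro s
    constructor
    · rw [hp s, sub_nonneg, le_div_iff₀ hL]
      have heq : (1 - lam) / lam * p0 * (lam * ωX * Ψ) = (1 - lam) * ωX * Ψ * p0 := by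
        field_simp
      rw [heq]
      linarith [hcs_nn s]
    · rw [hp s, sub_le_iff_le_add, div_le_iff₀ hL]
      have hrhs : (1 + (1 - lam) / lam * p0) * (lam * ωX * Ψ)
          = lam * ωX * Ψ + (1 - lam) * ωX * Ψ * p0 := by
        field_simp
      rw [hrhs]
      have := hcs_le s
      linarith
  -- integrals of ψ against the two-point strategies
  have hσ0int : ∫ s, (b ↑s + c ↑s) ∂σX0 = p0 * Ψ := by
    rw [hσX0, two_point_integral (fun s : Set.Icc (0:ℝ) K => b ↑s + c ↑s) K' Z' p0 (1 - p0)
      hp0nn (by linarith)]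
    simp [hK', hZ', hb0, hc0, hΨdef]
  have hσsint : ∀ s, ∫ x, (b ↑x + c ↑x) ∂(σX s) = p (Sum.elim id id s) * Ψ := by
    intro s
    rw [hσXs s, two_point_integral (fun s : Set.Icc (0:ℝ) K => b ↑s + c ↑s) K' Z' _ _
      (part1 _).1 (by linarith [(part1 (Sum.elim id id s)).2])]
    simp [hK', hZ', hb0, hc0, hΨdef]
  have key : ∀ s : Set.Icc (0 : ℝ) K,
      lam * ωX * (p s * Ψ) = c ↑s + γ - (1 - lam) * ωX * Ψ * p0 := by
    intro s
    rw [hp s]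
    field_simp
  have part2 : ∀ x : Set.Icc (0 : ℝ) K,
      b ↑x - γ = (b ↑x + c ↑x)
          - lam * ωX * (∫ s, (b ↑s + c ↑s) ∂(σX (Sum.inl x)))
          - (1 - lam) * ωX * (∫ s, (b ↑s + c ↑s) ∂σX0) := by
    intro x
    rw [hσsint, hσ0int]
    have := key x
    simp only [Sum.elim_inl, id_eq] at *
    linarith
  have part3 : ∀ y : Set.Icc (0 : ℝ) K,
      -(c ↑y) - γ = -(lam * ωX * (∫ s, (b ↑s + c ↑s) ∂(σX (Sum.inr y))))
          - (1 - lam) * ωX * (∫ s, (b ↑s + c ↑s) ∂σX0) := by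
    intro y
    rw [hσsint, hσ0int]
    have := key y
    simp only [Sum.elim_inr, id_eq] at *
    linarith
  refine ⟨part1, part2, part3, ?_⟩
  -- Part 4
  intro ν hprob h0 hrec
  have hZK : Z' ≠ K' := by
    simp only [hZ', hK', Ne, Subtype.mk.injEq]
    exact hK.ne
  set q : Set.Icc (0:ℝ) K ⊕ Set.Icc (0:ℝ) K → ℝ := Sum.elim p p with hq
  have hqe : ∀ s, p (Sum.elim id id s) = q s := by rintro (x | y) <;> rfl
  set φ : Set.Icc (0:ℝ) K ⊕ Set.Icc (0:ℝ) K → ℝ :=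
    Sum.elim (fun x => b ↑x + c ↑x) (fun _ => 0) with hφ
  set F : Set.Icc (0:ℝ) K ⊕ Set.Icc (0:ℝ) K → ℝ :=
    Sum.elim (fun x : Set.Icc (0:ℝ) K => b ↑x) (fun y : Set.Icc (0:ℝ) K => -(c ↑y)) with hF
  -- measurability
  have hpm : Measurable p := by
    have : p = fun s : Set.Icc (0:ℝ) K =>
        (c ↑s + γ) / (lam * ωX * Ψ) - ((1 - lam) / lam) * p0 := funext hp
    rw [this]
    exact ((((hcC.restrict).measurable).add_const γ).div_const _).sub_const _
  have hbm : Measurable fun s : Set.Icc (0:ℝ) K => b ↑s := (hbC.restrict).measurable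
  have hcm : Measurable fun s : Set.Icc (0:ℝ) K => c ↑s := (hcC.restrict).measurable
  have hqm : Measurable q := hpm.sumElim hpm
  have hφm : Measurable φ := (hbm.add hcm).sumElim measurable_const
  have hFm : Measurable F := hbm.sumElim hcm.neg
  have int_of_bdd : ∀ (f : Set.Icc (0:ℝ) K ⊕ Set.Icc (0:ℝ) K → ℝ), Measurable f →
      ∀ C : ℝ, (∀ s, |f s| ≤ C) → ∀ t, Integrable f (ν t) := by
    intro f hf C hC t
    have := hprob t
    exact ⟨hf.aestronglyMeasurable,
      HasFiniteIntegral.of_bounded (C := C) (Filter.Eventually.of_forall fun s => hC s)⟩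
  have hqint : ∀ t, Integrable q (ν t) := by
    refine int_of_bdd q hqm 1 ?_
    rintro (x | y)
    · simp only [hq, Sum.elim_inl, abs_le]
      exact ⟨by linarith [(part1 x).1], (part1 x).2⟩
    · simp only [hq, Sum.elim_inr, abs_le]
      exact ⟨by linarith [(part1 y).1], (part1 y).2⟩
  have hφint : ∀ t, Integrable φ (ν t) := by
    refine int_of_bdd φ hφm Ψ ?_
    rintro (x | y) <;> simp only [hφ, Sum.elim_inl, Sum.elim_inr, abs_le]
    · exact ⟨by linarith [hbs_nn x, hcs_nn x], by
        have := hbs_le x; have := hcs_le x; dsimp [Ψ]; linarith⟩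
    · constructor <;> [linarith; linarith]
  have hFint : ∀ t, Integrable F (ν t) := by
    refine int_of_bdd F hFm Ψ ?_
    rintro (x | y) <;> simp only [hF, Sum.elim_inl, Sum.elim_inr, abs_le]
    · exact ⟨by linarith [hbs_nn x], by
        have := hbs_le x; dsimp [Ψ]; linarith⟩
    · exact ⟨by simp; have := hcs_le y; dsimp [Ψ]; linarith, by
        have := hcs_nn y; linarith⟩
  -- singleton computations
  have hsK : MeasurableSet ({K'} : Set (Set.Icc (0:ℝ) K)) := measurableSet_singleton _
  have hσ0K : σX0 {K'} = ENNReal.ofReal p0 := by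
    rw [hσX0]
    simp [Measure.dirac_apply, Set.indicator_of_mem, Set.indicator_of_notMem, hZK]
  have hσsK : ∀ s, σX s {K'} = ENNReal.ofReal (q s) := by
    intro s
    rw [hσXs s, hqe s]
    simp [Measure.dirac_apply, Set.indicator_of_mem, Set.indicator_of_notMem, hZK]
  set E : Set (Set.Icc (0:ℝ) K) := ({Z'} ∪ {K'})ᶜ with hEdef
  have hE : MeasurableSet E :=
    (((measurableSet_singleton Z').union (measurableSet_singleton K'))).compl
  have hKE : K' ∉ E := by simp [hEdef]
  have hZE : Z' ∉ E := by simp [hEdef]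
  have hσ0E : σX0 E = 0 := by
    rw [hσX0]
    simp [Measure.dirac_apply, Set.indicator_of_notMem, hKE, hZE]
  have hσsE : ∀ s, σX s E = 0 := by
    intro s
    rw [hσXs s]
    simp [Measure.dirac_apply, Set.indicator_of_notMem, hKE, hZE]
  have hnull : ∀ t, ν t (Sum.inl '' E) = 0 := by
    intro t
    cases t with
    | zero => rw [h0 E hE, hσ0E, mul_zero]
    | succ n =>
        rw [hrec n E hE]
        have : ∫⁻ s, σX s E ∂(ν n) = 0 := by
          rw [lintegral_congr fun s => hσsE s, lintegral_zero]
        rw [this, mul_zero]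
  set m : ℕ → ℝ := fun t => (ν t {Sum.inl K'}).toReal with hm
  have hinlK : ({Sum.inl K'} : Set (Set.Icc (0:ℝ) K ⊕ Set.Icc (0:ℝ) K)) = Sum.inl '' {K'} := by
    rw [Set.image_singleton]
  have hinlKm : MeasurableSet ({Sum.inl K'} : Set (Set.Icc (0:ℝ) K ⊕ Set.Icc (0:ℝ) K)) := by
    rw [hinlK]; exact hsK.inl_image
  have hm0 : m 0 = ωX * p0 := by
    rw [hm]
    simp only
    rw [hinlK, h0 {K'} hsK, hσ0K, ← ENNReal.ofReal_mul hω0.le,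
      ENNReal.toReal_ofReal (by positivity)]
  have hmrec : ∀ t, m (t + 1) = ωX * ∫ s, q s ∂(ν t) := by
    intro t
    have := hprob t
    have hqnn : 0 ≤ᵐ[ν t] q := Filter.Eventually.of_forall (by
      rintro (x | y) <;> exact (part1 _).1)
    have hiq : ∫⁻ s, ENNReal.ofReal (q s) ∂(ν t) = ENNReal.ofReal (∫ s, q s ∂(ν t)) :=
      (ofReal_integral_eq_lintegral_ofReal (hqint t) hqnn).symm
    have hqnn' : 0 ≤ ∫ s, q s ∂(ν t) := integral_nonneg (by
      rintro (x | y) <;> exact (part1 _).1)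
    rw [hm]
    simp only
    rw [hinlK, hrec t {K'} hsK, lintegral_congr fun s => hσsK s, hiq,
      ← ENNReal.ofReal_mul hω0.le, ENNReal.toReal_ofReal (by positivity)]
  have hmnn : ∀ t, 0 ≤ m t := fun t => ENNReal.toReal_nonneg
  have hmle1 : ∀ t, m t ≤ 1 := by
    intro t
    have := hprob t
    have h := prob_le_one (μ := ν t) (s := {Sum.inl K'})
    have := ENNReal.toReal_mono ENNReal.one_ne_top h
    simpa using this
  -- ∫ φ = Ψ * m t
  have hφeq : ∀ t, ∫ s, φ s ∂(ν t) = Ψ * m t := by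
    intro t
    have := hprob t
    have hae : φ =ᵐ[ν t] Set.indicator {Sum.inl K'} (fun _ => Ψ) := by
      rw [Filter.EventuallyEq, ae_iff]
      refine measure_mono_null ?_ (hnull t)
      rintro (x | y) hs
      · by_cases hx : x = K'
        · exfalso; apply hs; subst hx
          simp [hφ, Set.indicator_of_mem, hΨdef, hK']
        · by_cases hz : x = Z'
          · exfalso; apply hs; subst hz
            have : (Sum.inl Z' : Set.Icc (0:ℝ) K ⊕ Set.Icc (0:ℝ) K) ∉
                ({Sum.inl K'} : Set _) := by simp [hZK]
            simp [hφ, Set.indicator_of_notMem this, hZ', hb0, hc0, Pi.single_apply, hK', hK.ne]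
          · exact ⟨x, by simp [hEdef, hx, hz], rfl⟩
      · exfalso; apply hs
        have : (Sum.inr y : Set.Icc (0:ℝ) K ⊕ Set.Icc (0:ℝ) K) ∉
            ({Sum.inl K'} : Set _) := by simp
        simp [hφ, Set.indicator_of_notMem this]
    rw [integral_congr_ae hae, integral_indicator_const Ψ hinlKm, smul_eq_mul, hm, measureReal_def]
    ring
  -- ∫ F = γ + Ψ m t − lam Ψ m (t+1) − (1−lam) ωX Ψ p0
  have hFpt : ∀ s, F s =
      (γ - (1 - lam) * ωX * Ψ * p0) + (φ s - (lam * ωX * Ψ) * q s) := by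
    rintro (x | y)
    · simp only [hF, hφ, hq, Sum.elim_inl]
      linear_combination key x
    · simp only [hF, hφ, hq, Sum.elim_inr]
      linear_combination key y
  have hFeq : ∀ t, ∫ s, F s ∂(ν t)
      = γ + Ψ * m t - lam * Ψ * m (t + 1) - (1 - lam) * ωX * Ψ * p0 := by
    intro t
    have := hprob t
    have hg : Integrable (fun s => φ s - (lam * ωX * Ψ) * q s) (ν t) :=
      (hφint t).sub ((hqint t).const_mul _)
    have hg2 : Integrable (fun s => (lam * ωX * Ψ) * q s) (ν t) := (hqint t).const_mul _
    rw [integral_congr_ae (Filter.Eventually.of_forall hFpt)]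
    rw [integral_add (integrable_const _) hg,
      integral_sub (hφint t) hg2, integral_const_mul, integral_const]
    simp only [measureReal_def, measure_univ, ENNReal.toReal_one, smul_eq_mul, one_mul]
    rw [hφeq t]
    linear_combination (lam * Ψ) * hmrec t
  -- the tsum
  have hS1 : Summable fun t : ℕ => lam ^ t := summable_geometric_of_lt_one hlam0.le hlam1
  have hS2 : Summable fun t : ℕ => lam ^ t * m t := by
    refine Summable.of_nonneg_of_le (fun t => by positivity) (fun t => ?_) hS1
    calc lam ^ t * m t ≤ lam ^ t * 1 := by
          have := hmle1 t
          have : 0 ≤ lam ^ t := by positivity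
          nlinarith [hmle1 t]
      _ = lam ^ t := mul_one _
  have hS3 : Summable fun t : ℕ => lam ^ (t + 1) * m (t + 1) :=
    (summable_nat_add_iff 1).2 hS2
  have hT2 : ∑' t : ℕ, lam ^ (t + 1) * m (t + 1) = (∑' t : ℕ, lam ^ t * m t) - m 0 := by
    have := hS2.tsum_eq_zero_add
    simp only [pow_zero, one_mul] at this
    linarith
  have htsum : ∑' t : ℕ, lam ^ t * ∫ s, F s ∂(ν t)
      = (γ - (1 - lam) * ωX * Ψ * p0) * (1 - lam)⁻¹ + Ψ * m 0 := by
    have step1 : ∀ t : ℕ, lam ^ t * ∫ s, F s ∂(ν t)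
        = (γ - (1 - lam) * ωX * Ψ * p0) * lam ^ t
          + Ψ * (lam ^ t * m t - lam ^ (t + 1) * m (t + 1)) := by
      intro t
      rw [hFeq t]
      ring
    rw [tsum_congr step1,
      Summable.tsum_add (hS1.mul_left _) ((hS2.sub hS3).mul_left Ψ),
      tsum_mul_left, tsum_mul_left, Summable.tsum_sub hS2 hS3, hT2,
      tsum_geometric_of_lt_one hlam0.le hlam1]
    ring
  have hgoal : ∑' t : ℕ, lam ^ t *
      ∫ s, Sum.elim (fun x : Set.Icc (0 : ℝ) K => b ↑x)
        (fun y : Set.Icc (0 : ℝ) K => -(c ↑y)) s ∂(ν t)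
      = (γ - (1 - lam) * ωX * Ψ * p0) * (1 - lam)⁻¹ + Ψ * m 0 := htsum
  rw [hgoal, hm0]
  field_simp
  ring
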